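/- Fix d ≥ 2. There exist constants c₃ and c₄ depending only on d such that for every rational map φ: ℙ¹ → ℙ¹ of degree d defined over K and every P ∈ ℙ¹(K), one has |ĥ_φ(P) − h(P)| ≤ c₃·h(φ) + c₄. -/

import Mathlib

open Polynomial Filter

noncomputable section

attribute [local instance] Classical.propDecidable

/-- A set of nonarchimedean places on a field `K`, satisfying the product formula;
this is the structure carried by the function field of a smooth projective curve
over an algebraically closed field of characteristic `0`. -/
structure PlaceData (K : Type*) [Field K] where
  Place : Type
  absv : Place → AbsoluteValue K ℝ
  nonarch : ∀ (v : Place) (x y : K), absv v (x + y) ≤ max (absv v x) (absv v y)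
  finite_support : ∀ x : K, x ≠ 0 → {v : Place | absv v x ≠ 1}.Finite
  product_formula : ∀ x : K, x ≠ 0 → (∑ᶠ v : Place, Real.log (absv v x)) = 0

variable {K : Type*} [Field K]

/-- The (absolute logarithmic) height of an element of `K`. -/
def PlaceData.ht (M : PlaceData K) (x : K) : ℝ :=
  ∑ᶠ v : M.Place, Real.log (max (M.absv v x) 1)

/-- Points of `ℙ¹(K) = K ∪ {∞}` are modelled by `Option K`: `some x = [x:1]`, `none = ∞`. -/
def PlaceData.htP1 (M : PlaceData K) : Option K → ℝ
  | Option.some x => M.ht x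
  | Option.none => 0

/-- `max` of `av` over the coefficients of a polynomial. -/
def polyAbs (av : AbsoluteValue K ℝ) (p : K[X]) : ℝ :=
  (Finset.range (p.natDegree + 1)).sup' ⟨0, Finset.mem_range.mpr (Nat.succ_pos _)⟩ fun i => av (p.coeff i)

/-- The height of a rational function `φ = f/g` with `f, g` coprime. -/
def PlaceData.htRF (M : PlaceData K) (φ : RatFunc K) : ℝ :=
  ∑ᶠ v : M.Place, Real.log (max (polyAbs (M.absv v) φ.num) (polyAbs (M.absv v) φ.denom))

/-- The degree of a rational function. -/
def degRF (φ : RatFunc K) : ℕ := max φ.num.natDegree φ.denom.natDegree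

/-- Evaluation of a rational map `φ` on `ℙ¹(K) = K ∪ {∞}`. -/
def evalP1 (φ : RatFunc K) : Option K → Option K
  | Option.some a =>
      if φ.denom.eval a = 0 then Option.none
      else Option.some (φ.num.eval a / φ.denom.eval a)
  | Option.none =>
      if φ.denom.natDegree < φ.num.natDegree then Option.none
      else Option.some (φ.num.coeff φ.denom.natDegree / φ.denom.leadingCoeff)

/-- Composition of rational functions. -/
def RFcomp (φ ψ : RatFunc K) : RatFunc K :=
  φ.num.eval₂ (algebraMap K (RatFunc K)) ψ / φ.denom.eval₂ (algebraMap K (RatFunc K)) ψ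

/-- The `n`-fold iterate `φⁿ = φ ∘ ⋯ ∘ φ` as a rational function. -/
def RFiter (φ : RatFunc K) : ℕ → RatFunc K
  | 0 => RatFunc.X
  | n + 1 => RFcomp φ (RFiter φ n)

/-- The canonical height `ĥ_φ(P) = lim_n h(φⁿ(P))/dⁿ`. -/
def canHt (M : PlaceData K) (φ : RatFunc K) (P : Option K) : ℝ :=
  limUnder atTop fun n : ℕ => M.htP1 ((evalP1 φ)^[n] P) / (degRF φ : ℝ) ^ n

/-- `P ∈ ℙ¹(K)` is preperiodic for `φ` if its forward orbit is finite. -/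
def P1Preperiodic (φ : RatFunc K) (P : Option K) : Prop :=
  (Set.range fun n : ℕ => (evalP1 φ)^[n] P).Finite

/-- Base change of a rational function along a field embedding. -/
def mapRF {L : Type*} [Field L] (f : K →+* L) (φ : RatFunc K) : RatFunc L :=
  algebraMap L[X] (RatFunc L) (φ.num.map f) / algebraMap L[X] (RatFunc L) (φ.denom.map f)

/-- Base change of a point of `ℙ¹`. -/
def mapP1 {L : Type*} [Field L] (f : K →+* L) : Option K → Option L :=
  Option.map fun x => f x

/-- `φ ∈ K(z)` is isotrivial if some Möbius conjugate `M⁻¹ ∘ φ ∘ M`, with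
`M ∈ PGL₂(K̄)`, has all coefficients in the field of constants `k`. -/
def IsIsotrivial (k : Type*) [Field k] [Algebra k K] (φ : RatFunc K) : Prop :=
  ∃ a b c d : AlgebraicClosure K, a * d - b * c ≠ 0 ∧
    ∃ ψ : RatFunc (AlgebraicClosure K),
      ψ = RFcomp
            ((RatFunc.C d * RatFunc.X - RatFunc.C b) /
              (-(RatFunc.C c) * RatFunc.X + RatFunc.C a))
            (RFcomp (mapRF (algebraMap K (AlgebraicClosure K)) φ)
              ((RatFunc.C a * RatFunc.X + RatFunc.C b) /
                (RatFunc.C c * RatFunc.X + RatFunc.C d))) ∧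
      (∀ i, ψ.num.coeff i ∈
        Set.range ((algebraMap K (AlgebraicClosure K)).comp (algebraMap k K))) ∧
      (∀ i, ψ.denom.coeff i ∈
        Set.range ((algebraMap K (AlgebraicClosure K)).comp (algebraMap k K)))

/-- `Q ∈ ℙ¹(K)` is exceptional for `φ` if its total backward orbit in `ℙ¹(K̄)` is finite. -/
def IsExceptional (φ : RatFunc K) (Q : Option K) : Prop :=
  {P : Option (AlgebraicClosure K) | ∃ m : ℕ, 1 ≤ m ∧
    (evalP1 (mapRF (algebraMap K (AlgebraicClosure K)) φ))^[m] P
      = mapP1 (algebraMap K (AlgebraicClosure K)) Q}.Finite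

/-- The chordal metric `ρ_v` on `ℙ¹`, relative to an absolute value. -/
def chordalDist (av : AbsoluteValue K ℝ) : Option K → Option K → ℝ
  | Option.some x, Option.some y => av (x - y) / (max (av x) 1 * max (av y) 1)
  | Option.some x, Option.none => 1 / max (av x) 1
  | Option.none, Option.some y => 1 / max (av y) 1
  | Option.none, Option.none => 0

/-- The logarithmic chordal metric `λ_v = - log ρ_v`. -/
def lamv (av : AbsoluteValue K ℝ) (P Q : Option K) : ℝ := - Real.log (chordalDist av P Q)

/-- The ring of `S`-integers `R_S = {x ∈ K : |x|_v ≤ 1 for all v ∉ S}`. -/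
def SInt (M : PlaceData K) (S : Finset M.Place) : Set K :=
  {x : K | ∀ v : M.Place, v ∉ S → M.absv v x ≤ 1}

/-- The group of `S`-units `R_S^* = {x ∈ K : x ≠ 0, |x|_v = 1 for all v ∉ S}`. -/
def SUnit (M : PlaceData K) (S : Finset M.Place) : Set K :=
  {x : K | x ≠ 0 ∧ ∀ v : M.Place, v ∉ S → M.absv v x = 1}

/-- Ramification index of `f` at a finite point `a` with `f(a)` finite,
`e_a(f) = ord_a (f(z) - f(a))`; if `f(a) = ∞` it is the order of the pole. -/
def ramIndexFin (f : RatFunc K) (a : K) : ℕ :=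
  if f.denom.eval a = 0 then f.denom.rootMultiplicity a
  else ((f - RatFunc.C (f.num.eval a / f.denom.eval a)).num).rootMultiplicity a

/-- Ramification index `e_P(f)` of `f` at `P ∈ ℙ¹(K)`; the point `∞` is handled by
conjugating with the Möbius transformation `z ↦ 1/z`. -/
def ramIndex (f : RatFunc K) : Option K → ℕ
  | Option.some a => ramIndexFin f a
  | Option.none => ramIndexFin (RFcomp f (1 / RatFunc.X)) 0

/-- `log_d⁺ t = max (log t / log d) 0`. -/
def logdPlus (d : ℕ) (t : ℝ) : ℝ := max (Real.log t / Real.log d) 0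

/-- `inf {ĥ_φ(Q) : Q ∈ ℙ¹(K), ĥ_φ(Q) > 0}`. -/
def infposCanHt (M : PlaceData K) (φ : RatFunc K) : ℝ :=
  sInf {t : ℝ | 0 < t ∧ ∃ Q : Option K, canHt M φ Q = t}

/-- `K` is an (algebraic) function field in one variable over `k`. -/
def IsFunctionFieldOver (k K : Type*) [Field k] [Field K] [Algebra k K] : Prop :=
  ∃ t : K, Transcendental k t ∧
    FiniteDimensional (IntermediateField.adjoin k ({t} : Set K)) K

section Helpers

lemma log_le_log_aux {a b : ℝ} (h0 : 0 ≤ a) (hab : a ≤ b) (hb : 1 ≤ b) :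
    Real.log a ≤ Real.log b := by
  rcases eq_or_lt_of_le h0 with h | h
  · rw [← h, Real.log_zero]; exact Real.log_nonneg hb
  · exact Real.log_le_log h hab

lemma finsum_mono {ι : Type} {f g : ι → ℝ} (hf : (Function.support f).Finite)
    (hg : (Function.support g).Finite) (h : ∀ i, f i ≤ g i) :
    ∑ᶠ i, f i ≤ ∑ᶠ i, g i := by
  classical
  rw [finsum_eq_finset_sum_of_support_subset f (s := (hf.union hg).toFinset)
      (by rw [Set.Finite.coe_toFinset]; exact Set.subset_union_left),
    finsum_eq_finset_sum_of_support_subset g (s := (hf.union hg).toFinset)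
      (by rw [Set.Finite.coe_toFinset]; exact Set.subset_union_right)]
  exact Finset.sum_le_sum fun i _ => h i

variable (av : AbsoluteValue K ℝ)

lemma av_sum_le {ι : Type*} (hna : ∀ x y : K, av (x + y) ≤ max (av x) (av y))
    (s : Finset ι) (f : ι → K) {C : ℝ} (hC : 0 ≤ C) (h : ∀ i ∈ s, av (f i) ≤ C) :
    av (∑ i ∈ s, f i) ≤ C := by
  classical
  induction s using Finset.cons_induction with
  | empty => simpa using hC
  | cons a s ha ih =>
      rw [Finset.sum_cons]
      refine le_trans (hna _ _) (max_le (h a (Finset.mem_cons_self _ _))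
        (ih fun i hi => h i (Finset.mem_cons_of_mem hi)))

lemma av_det_le (hna : ∀ x y : K, av (x + y) ≤ max (av x) (av y)) {n : ℕ}
    (A : Matrix (Fin n) (Fin n) K) {C : ℝ} (hC : 1 ≤ C)
    (h : ∀ i j, av (A i j) ≤ C) : av A.det ≤ C ^ n := by
  rw [Matrix.det_apply]
  refine av_sum_le av hna _ _ (by positivity) ?_
  intro σ _
  have h1 : av (Equiv.Perm.sign σ • ∏ i, A (σ i) i) = av (∏ i, A (σ i) i) := by
    rcases Int.units_eq_one_or (Equiv.Perm.sign σ) with h1 | h1 <;>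
      simp [h1, av.map_neg]
  rw [h1, map_prod]
  calc ∏ i, av (A (σ i) i) ≤ ∏ _i : Fin n, C :=
        Finset.prod_le_prod (fun _ _ => av.nonneg _) (fun i _ => h _ _)
    _ = C ^ n := by simp

lemma av_eval_le (hna : ∀ x y : K, av (x + y) ≤ max (av x) (av y))
    (p : K[X]) (x : K) {B : ℝ} {n : ℕ} (hB : 0 ≤ B)
    (hd : p.natDegree ≤ n) (hc : ∀ i, av (p.coeff i) ≤ B) :
    av (p.eval x) ≤ B * max (av x) 1 ^ n := by
  have hm : (1:ℝ) ≤ max (av x) 1 := le_max_right _ _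
  rw [Polynomial.eval_eq_sum_range]
  refine av_sum_le av hna _ _ (by positivity) ?_
  intro i hi
  rw [av.map_mul, av.map_pow]
  have hin : i ≤ n := by
    have := Finset.mem_range.mp hi; omega
  have h1 : av x ^ i ≤ max (av x) 1 ^ n :=
    le_trans (pow_le_pow_left₀ (av.nonneg x) (le_max_left _ _) i)
      (pow_le_pow_right₀ hm hin)
  exact mul_le_mul (hc i) h1 (by positivity) hB

lemma polyAbs_nonneg (p : K[X]) : 0 ≤ polyAbs av p := by
  unfold polyAbs
  exact le_trans (av.nonneg (p.coeff 0))
    (Finset.le_sup' (f := fun i => av (p.coeff i))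
      (Finset.mem_range.mpr (by omega : 0 < p.natDegree + 1)))

lemma av_coeff_le_polyAbs (p : K[X]) (i : ℕ) : av (p.coeff i) ≤ polyAbs av p := by
  rcases le_or_gt i p.natDegree with h | h
  · unfold polyAbs
    exact Finset.le_sup' (f := fun i => av (p.coeff i))
      (Finset.mem_range.mpr (Nat.lt_succ_of_le h))
  · rw [coeff_eq_zero_of_natDegree_lt h]
    simpa using polyAbs_nonneg av p

lemma polyAbs_le (p : K[X]) {C : ℝ} (h : ∀ i, av (p.coeff i) ≤ C) :
    polyAbs av p ≤ C :=
  Finset.sup'_le _ _ fun i _ => h i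

lemma av_leadingCoeff_le (p : K[X]) : av p.leadingCoeff ≤ polyAbs av p :=
  av_coeff_le_polyAbs av p _

lemma polyAbs_C_mul_le (a : K) (p : K[X]) :
    polyAbs av (C a * p) ≤ av a * polyAbs av p := by
  refine polyAbs_le av _ ?_
  intro i
  rw [coeff_C_mul, av.map_mul]
  exact mul_le_mul_of_nonneg_left (av_coeff_le_polyAbs av p i) (av.nonneg a)

lemma polyAbs_C_mul {a : K} (ha : a ≠ 0) (p : K[X]) :
    polyAbs av (C a * p) = av a * polyAbs av p := by
  refine le_antisymm (polyAbs_C_mul_le av a p) ?_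
  have h1 := polyAbs_C_mul_le av a⁻¹ (C a * p)
  rw [← mul_assoc, ← C_mul, inv_mul_cancel₀ ha, C_1, one_mul, map_inv₀] at h1
  have hava : (0:ℝ) < av a := av.pos ha
  calc av a * polyAbs av p ≤ av a * ((av a)⁻¹ * polyAbs av (C a * p)) :=
        mul_le_mul_of_nonneg_left h1 (av.nonneg a)
    _ = polyAbs av (C a * p) := by field_simp

lemma coprime_eval_ne {f g : K[X]} (h : IsCoprime f g) (x : K)
    (hg : g.eval x = 0) : f.eval x ≠ 0 := by
  obtain ⟨u, v, huv⟩ := h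
  intro hf
  have h2 := congrArg (Polynomial.eval x) huv
  simp [hf, hg] at h2

lemma exists_bezout {d : ℕ} (hd : 1 ≤ d) (f g : K[X]) (hcop : IsCoprime f g)
    (hfd : f.natDegree ≤ d) (hgd : g.natDegree ≤ d)
    (htop : f.natDegree = d ∨ g.natDegree = d) (hf0 : f ≠ 0) (hg0 : g ≠ 0) :
    ∃ R : K, R ≠ 0 ∧ ∀ j₀ : Fin (2 * d), ∃ a b : K[X],
      a.natDegree < d ∧ b.natDegree < d ∧ a * f + b * g = C R * X ^ (j₀ : ℕ) ∧
      ∀ (av : AbsoluteValue K ℝ), (∀ x y : K, av (x + y) ≤ max (av x) (av y)) →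
        ∀ i : ℕ, av (a.coeff i) ≤ max (max (polyAbs av f) (polyAbs av g)) 1 ^ (2 * d) ∧
                 av (b.coeff i) ≤ max (max (polyAbs av f) (polyAbs av g)) 1 ^ (2 * d) := by
  classical
  set N : Matrix (Fin (2 * d)) (Fin (2 * d)) K := Matrix.of fun j i =>
    if (i : ℕ) < d then (f * X ^ (i : ℕ)).coeff (j : ℕ)
    else (g * X ^ ((i : ℕ) - d)).coeff (j : ℕ) with hN
  -- polynomials from vectors
  set A : (Fin (2 * d) → K) → K[X] := fun w =>
    ∑ i : Fin (2 * d), if (i : ℕ) < d then C (w i) * X ^ (i : ℕ) else 0 with hA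
  set B : (Fin (2 * d) → K) → K[X] := fun w =>
    ∑ i : Fin (2 * d), if (i : ℕ) < d then 0 else C (w i) * X ^ ((i : ℕ) - d) with hB
  have hAdeg : ∀ w, (A w).natDegree ≤ d - 1 := by
    intro w
    refine natDegree_sum_le_of_forall_le _ _ ?_
    intro i _
    by_cases hi : (i : ℕ) < d
    · rw [if_pos hi]
      exact le_trans (natDegree_C_mul_le _ _) (by rw [natDegree_X_pow]; omega)
    · rw [if_neg hi]; simp
  have hBdeg : ∀ w, (B w).natDegree ≤ d - 1 := by
    intro w
    refine natDegree_sum_le_of_forall_le _ _ ?_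
    intro i _
    by_cases hi : (i : ℕ) < d
    · rw [if_pos hi]; simp
    · rw [if_neg hi]
      refine le_trans (natDegree_C_mul_le _ _) ?_
      rw [natDegree_X_pow]
      have := i.isLt; omega
  have hABdeg : ∀ w, (A w * f + B w * g).natDegree < 2 * d := by
    intro w
    refine lt_of_le_of_lt (natDegree_add_le _ _) ?_
    have h1 : (A w * f).natDegree ≤ (d - 1) + d :=
      le_trans natDegree_mul_le (add_le_add (hAdeg w) hfd)
    have h2 : (B w * g).natDegree ≤ (d - 1) + d :=
      le_trans natDegree_mul_le (add_le_add (hBdeg w) hgd)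
    have : (d - 1) + d < 2 * d := by omega
    exact max_lt (lt_of_le_of_lt h1 this) (lt_of_le_of_lt h2 this)
  have hkey : ∀ (w : Fin (2 * d) → K) (j : Fin (2 * d)),
      (A w * f + B w * g).coeff (j : ℕ) = N.mulVec w j := by
    intro w j
    rw [coeff_add, hA, hB, Finset.sum_mul, Finset.sum_mul, finset_sum_coeff,
      finset_sum_coeff, ← Finset.sum_add_distrib]
    rw [Matrix.mulVec, dotProduct]
    refine Finset.sum_congr rfl ?_
    intro i _
    by_cases hi : (i : ℕ) < d
    · rw [if_pos hi, if_pos hi, zero_mul, coeff_zero, add_zero, hN]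
      rw [Matrix.of_apply, if_pos hi]
      rw [show C (w i) * X ^ (i : ℕ) * f = C (w i) * (f * X ^ (i : ℕ)) by ring,
        coeff_C_mul]
      ring
    · rw [if_neg hi, if_neg hi, zero_mul, coeff_zero, zero_add, hN]
      rw [Matrix.of_apply, if_neg hi]
      rw [show C (w i) * X ^ ((i : ℕ) - d) * g = C (w i) * (g * X ^ ((i : ℕ) - d)) by ring,
        coeff_C_mul]
      ring
  have hpoly_eq : ∀ p q : K[X], p.natDegree < 2 * d → q.natDegree < 2 * d →
      (∀ j : Fin (2 * d), p.coeff (j : ℕ) = q.coeff (j : ℕ)) → p = q := by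
    intro p q hp hq h
    ext n
    rcases lt_or_ge n (2 * d) with hn | hn
    · exact h ⟨n, hn⟩
    · rw [coeff_eq_zero_of_natDegree_lt (lt_of_lt_of_le hp hn),
        coeff_eq_zero_of_natDegree_lt (lt_of_lt_of_le hq hn)]
  have hAcoeff : ∀ (w : Fin (2 * d) → K) (i : Fin (2 * d)), (i : ℕ) < d →
      (A w).coeff (i : ℕ) = w i := by
    intro w i hi
    rw [hA, finset_sum_coeff, Finset.sum_eq_single i]
    · rw [if_pos hi, coeff_C_mul, coeff_X_pow, if_pos rfl, mul_one]
    · intro k _ hk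
      by_cases hkd : (k : ℕ) < d
      · rw [if_pos hkd, coeff_C_mul, coeff_X_pow, if_neg, mul_zero]
        exact fun h => hk (Fin.ext h.symm)
      · rw [if_neg hkd, coeff_zero]
    · intro h; exact absurd (Finset.mem_univ i) h
  have hBcoeff : ∀ (w : Fin (2 * d) → K) (i : Fin (2 * d)), d ≤ (i : ℕ) →
      (B w).coeff ((i : ℕ) - d) = w i := by
    intro w i hi
    rw [hB, finset_sum_coeff, Finset.sum_eq_single i]
    · rw [if_neg (by omega), coeff_C_mul, coeff_X_pow, if_pos rfl, mul_one]
    · intro k _ hk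
      by_cases hkd : (k : ℕ) < d
      · rw [if_pos hkd, coeff_zero]
      · rw [if_neg hkd, coeff_C_mul, coeff_X_pow, if_neg, mul_zero]
        intro h
        exact hk (Fin.ext (by omega))
    · intro h; exact absurd (Finset.mem_univ i) h
  -- determinant nonzero
  have hdet : N.det ≠ 0 := by
    intro h0
    obtain ⟨w, hw0, hwv⟩ := Matrix.exists_mulVec_eq_zero_iff.mpr h0
    have hzero : A w * f + B w * g = 0 := by
      refine hpoly_eq _ _ (hABdeg w) (by simp; omega) ?_
      intro j
      rw [hkey w j, hwv]
      simp
    have hAB0 : A w = 0 ∧ B w = 0 := by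
      have heq : A w * f = -(B w * g) := by linear_combination hzero
      rcases htop with htf | htg
      · have hdvd : f ∣ B w := by
          refine hcop.dvd_of_dvd_mul_right ?_
          exact ⟨-(A w), by linear_combination heq⟩
        have hB0 : B w = 0 := by
          by_contra hB0
          have := Polynomial.natDegree_le_of_dvd hdvd hB0
          have := hBdeg w
          omega
        refine ⟨?_, hB0⟩
        have : A w * f = 0 := by rw [heq, hB0, zero_mul, neg_zero]
        rcases mul_eq_zero.mp this with h | h
        · exact h
        · exact absurd h hf0
      · have hdvd : g ∣ A w := by
          refine hcop.symm.dvd_of_dvd_mul_right ?_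
          exact ⟨-(B w), by linear_combination heq⟩
        have hA0 : A w = 0 := by
          by_contra hA0
          have := Polynomial.natDegree_le_of_dvd hdvd hA0
          have := hAdeg w
          omega
        refine ⟨hA0, ?_⟩
        have : B w * g = 0 := by
          rw [hA0, zero_mul, zero_add] at hzero; exact hzero
        rcases mul_eq_zero.mp this with h | h
        · exact h
        · exact absurd h hg0
      done
    apply hw0
    funext i
    rcases lt_or_ge (i : ℕ) d with hi | hi
    · have := hAcoeff w i hi
      rw [hAB0.1] at this
      simpa using this.symm
    · have := hBcoeff w i hi
      rw [hAB0.2] at this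
      simpa using this.symm
  refine ⟨N.det, hdet, ?_⟩
  intro j₀
  set w : Fin (2 * d) → K := N.cramer (Pi.single j₀ (1:K)) with hw
  have hmv : N.mulVec w = N.det • (Pi.single j₀ (1:K) : Fin (2*d) → K) := Matrix.mulVec_cramer N _
  refine ⟨A w, B w, by have := hAdeg w; omega, by have := hBdeg w; omega, ?_, ?_⟩
  · refine hpoly_eq _ _ (hABdeg w) ?_ ?_
    · have h1 : (C N.det * X ^ (j₀ : ℕ)).natDegree ≤ (j₀ : ℕ) :=
        le_trans (natDegree_C_mul_le _ _) (by rw [natDegree_X_pow])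
      have := j₀.isLt
      omega
    · intro j
      rw [hkey w j, hmv, coeff_C_mul, coeff_X_pow]
      rw [Pi.smul_apply, Pi.single_apply, smul_eq_mul]
      by_cases hj : j = j₀
      · rw [if_pos hj, if_pos (by rw [hj])]
      · rw [if_neg hj, if_neg (fun h => hj (Fin.ext h))]
  · intro av hna i
    set Phi := max (max (polyAbs av f) (polyAbs av g)) 1 with hPhi
    have hPhi1 : (1:ℝ) ≤ Phi := le_max_right _ _
    have hwbound : ∀ k : Fin (2 * d), av (w k) ≤ Phi ^ (2 * d) := by
      intro k
      rw [hw, Matrix.cramer_apply]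
      refine av_det_le av hna _ hPhi1 ?_
      intro r s
      rw [Matrix.updateCol_apply]
      by_cases hs : s = k
      · rw [if_pos hs, Pi.single_apply]
        by_cases hr : r = j₀
        · rw [if_pos hr, av.map_one]; exact hPhi1
        · rw [if_neg hr, av.map_zero]; linarith
      · rw [if_neg hs, hN, Matrix.of_apply]
        by_cases hsd : (s : ℕ) < d
        · rw [if_pos hsd]
          rw [coeff_mul_X_pow']
          by_cases hle : (s : ℕ) ≤ (r : ℕ)
          · rw [if_pos hle]
            exact le_trans (av_coeff_le_polyAbs av f _)
              (le_trans (le_max_left _ _) (le_max_left _ _))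
          · rw [if_neg hle, av.map_zero]; linarith
        · rw [if_neg hsd]
          rw [coeff_mul_X_pow']
          by_cases hle : (s : ℕ) - d ≤ (r : ℕ)
          · rw [if_pos hle]
            exact le_trans (av_coeff_le_polyAbs av g _)
              (le_trans (le_max_right _ _) (le_max_left _ _))
          · rw [if_neg hle, av.map_zero]; linarith
    have hPow0 : (0:ℝ) ≤ Phi ^ (2 * d) := by positivity
    constructor
    · rcases lt_or_ge i d with hi | hi
      · have hi2 : i < 2 * d := by omega
        have := hAcoeff w ⟨i, hi2⟩ hi
        rw [show ((⟨i, hi2⟩ : Fin (2 * d)) : ℕ) = i from rfl] at this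
        rw [this]
        exact hwbound _
      · rw [coeff_eq_zero_of_natDegree_lt (by have := hAdeg w; omega : (A w).natDegree < i),
          av.map_zero]
        exact hPow0
    · rcases lt_or_ge i d with hi | hi
      · have hi2 : d + i < 2 * d := by omega
        have := hBcoeff w ⟨d + i, hi2⟩ (by simp)
        rw [show ((⟨d + i, hi2⟩ : Fin (2 * d)) : ℕ) - d = i by simp] at this
        rw [this]
        exact hwbound _
      · rw [coeff_eq_zero_of_natDegree_lt (by have := hBdeg w; omega : (B w).natDegree < i),
          av.map_zero]
        exact hPow0

lemma key_bounds {d : ℕ} (hd : 1 ≤ d) (f g : K[X]) (hcop : IsCoprime f g)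
    (hfd : f.natDegree ≤ d) (hgd : g.natDegree ≤ d)
    (htop : f.natDegree = d ∨ g.natDegree = d) (hf0 : f ≠ 0) (hg0 : g ≠ 0) :
    ∃ R : K, R ≠ 0 ∧ ∀ (av : AbsoluteValue K ℝ),
      (∀ x y : K, av (x + y) ≤ max (av x) (av y)) → ∀ x : K,
      av R * max (av x) 1 ^ d ≤
        max (max (polyAbs av f) (polyAbs av g)) 1 ^ (2 * d) *
          max (av (f.eval x)) (av (g.eval x)) := by
  obtain ⟨R, hR0, hbez⟩ := exists_bezout hd f g hcop hfd hgd htop hf0 hg0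
  refine ⟨R, hR0, ?_⟩
  intro av hna x
  set Phi := max (max (polyAbs av f) (polyAbs av g)) 1 with hPhi
  have hPhi1 : (1:ℝ) ≤ Phi := le_max_right _ _
  set m := max (av x) 1 with hm
  have hm1 : (1:ℝ) ≤ m := le_max_right _ _
  set E := max (av (f.eval x)) (av (g.eval x)) with hE
  have hE0 : (0:ℝ) ≤ E := le_trans (av.nonneg _) (le_max_left _ _)
  -- generic evaluation bound from a bezout pair
  have hgen : ∀ j₀ : Fin (2 * d),
      av R * av x ^ (j₀ : ℕ) ≤ Phi ^ (2 * d) * m ^ (d - 1) * E := by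
    intro j₀
    obtain ⟨a, b, had, hbd, heq, hcoeff⟩ := hbez j₀
    have heval : a.eval x * f.eval x + b.eval x * g.eval x = R * x ^ (j₀ : ℕ) := by
      have := congrArg (Polynomial.eval x) heq
      simpa using this
    have hax : av (a.eval x) ≤ Phi ^ (2 * d) * m ^ (d - 1) := by
      refine av_eval_le av hna a x (by positivity) (by omega) ?_
      intro i; exact (hcoeff av hna i).1
    have hbx : av (b.eval x) ≤ Phi ^ (2 * d) * m ^ (d - 1) := by
      refine av_eval_le av hna b x (by positivity) (by omega) ?_
      intro i; exact (hcoeff av hna i).2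
    calc av R * av x ^ (j₀ : ℕ) = av (R * x ^ (j₀ : ℕ)) := by
          rw [av.map_mul, av.map_pow]
      _ = av (a.eval x * f.eval x + b.eval x * g.eval x) := by rw [heval]
      _ ≤ max (av (a.eval x * f.eval x)) (av (b.eval x * g.eval x)) := hna _ _
      _ ≤ Phi ^ (2 * d) * m ^ (d - 1) * E := by
          refine max_le ?_ ?_
          · rw [av.map_mul]
            exact mul_le_mul hax (le_max_left _ _) (av.nonneg _) (by positivity)
          · rw [av.map_mul]
            exact mul_le_mul hbx (le_max_right _ _) (av.nonneg _) (by positivity)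
  rcases le_or_gt (av x) 1 with hx1 | hx1
  · have hmeq : m = 1 := max_eq_right hx1
    have h0 := hgen ⟨0, by omega⟩
    simp only [pow_zero, mul_one] at h0
    rw [hmeq, one_pow, mul_one] at h0
    rw [hmeq, one_pow, mul_one]
    exact h0
  · have hmeq : m = av x := max_eq_left (le_of_lt hx1)
    have hxpos : (0:ℝ) < av x := lt_trans one_pos hx1
    have h1 := hgen ⟨2 * d - 1, by omega⟩
    simp only at h1
    -- multiply target by (av x)^(d-1)
    have hpowpos : (0:ℝ) < av x ^ (d - 1) := pow_pos hxpos _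
    refine le_of_mul_le_mul_right ?_ hpowpos
    have hexp : av R * m ^ d * av x ^ (d - 1) = av R * av x ^ (2 * d - 1) := by
      rw [hmeq, mul_assoc, ← pow_add]
      congr 2
      omega
    rw [hexp]
    calc av R * av x ^ (2 * d - 1) ≤ Phi ^ (2 * d) * m ^ (d - 1) * E := h1
      _ = Phi ^ (2 * d) * E * av x ^ (d - 1) := by rw [hmeq]; ring

end Helpers

section Sums

lemma bad_finite (M : PlaceData K) (y : K) :
    {v : M.Place | M.absv v y ≠ 1 ∧ y ≠ 0}.Finite := by
  by_cases hy : y = 0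
  · convert Set.finite_empty using 1
    ext v; simp [hy]
  · exact (M.finite_support y hy).subset (fun v hv => hv.1)

lemma off_bad {M : PlaceData K} {y : K} {v : M.Place}
    (h : v ∉ {v : M.Place | M.absv v y ≠ 1 ∧ y ≠ 0}) :
    M.absv v y = 1 ∨ M.absv v y = 0 := by
  by_cases hy : y = 0
  · right; rw [hy, map_zero]
  · left
    by_contra h1
    exact h ⟨h1, hy⟩

lemma supp_logmax2 (M : PlaceData K) (y z : K) :
    (Function.support fun v => Real.log (max (M.absv v y) (M.absv v z))).Finite := by
  refine ((bad_finite M y).union (bad_finite M z)).subset ?_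
  intro v hv
  rw [Function.mem_support] at hv
  by_contra hvn
  rw [Set.mem_union] at hvn
  push_neg at hvn
  have hor : max (M.absv v y) (M.absv v z) = 1 ∨ max (M.absv v y) (M.absv v z) = 0 := by
    rcases off_bad hvn.1 with h1 | h1 <;> rcases off_bad hvn.2 with h2 | h2 <;>
      rw [h1, h2]
    · left; exact max_self 1
    · left; exact max_eq_left zero_le_one
    · left; exact max_eq_right zero_le_one
    · right; exact max_self 0
  rcases hor with h | h <;> rw [h] at hv
  · exact hv Real.log_one
  · exact hv Real.log_zero

lemma supp_logmax1 (M : PlaceData K) (y : K) :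
    (Function.support fun v => Real.log (max (M.absv v y) 1)).Finite := by
  have h := supp_logmax2 M y 1
  simpa [map_one] using h

lemma supp_log (M : PlaceData K) {y : K} (hy : y ≠ 0) :
    (Function.support fun v => Real.log (M.absv v y)).Finite := by
  refine (M.finite_support y hy).subset ?_
  intro v hv
  rw [Function.mem_support] at hv
  by_contra h
  simp only [Set.mem_setOf_eq, not_not] at h
  rw [h, Real.log_one] at hv
  exact hv rfl

lemma supp_logPhi (M : PlaceData K) (p q : K[X]) (hq : q ≠ 0) :
    (Function.support fun v =>
      Real.log (max (polyAbs (M.absv v) p) (polyAbs (M.absv v) q))).Finite := by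
  have hfin : ((⋃ i : Fin (p.natDegree + 1),
      {v : M.Place | M.absv v (p.coeff i) ≠ 1 ∧ p.coeff (i : ℕ) ≠ 0}) ∪
      ((⋃ i : Fin (q.natDegree + 1),
      {v : M.Place | M.absv v (q.coeff i) ≠ 1 ∧ q.coeff (i : ℕ) ≠ 0}) ∪
      {v : M.Place | M.absv v q.leadingCoeff ≠ 1 ∧ q.leadingCoeff ≠ 0})).Finite := by
    refine Set.Finite.union (Set.finite_iUnion fun i => bad_finite M _)
      (Set.Finite.union (Set.finite_iUnion fun i => bad_finite M _) (bad_finite M _))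
  refine hfin.subset ?_
  intro v hv
  rw [Function.mem_support] at hv
  by_contra hvn
  simp only [Set.mem_union, Set.mem_iUnion, not_or, not_exists] at hvn
  obtain ⟨h1, h2, h3⟩ := hvn
  have hcoeffle : ∀ (r : K[X]) (_ : ∀ i : Fin (r.natDegree + 1),
      v ∉ {v : M.Place | M.absv v (r.coeff i) ≠ 1 ∧ r.coeff (i : ℕ) ≠ 0}),
      polyAbs (M.absv v) r ≤ 1 := by
    intro r hr
    refine polyAbs_le _ _ ?_
    intro i
    rcases le_or_gt i r.natDegree with hi | hi
    · rcases off_bad (hr ⟨i, by omega⟩) with h | h <;> rw [h]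
      exact zero_le_one
    · rw [coeff_eq_zero_of_natDegree_lt hi, map_zero]
      exact zero_le_one
  have hple : polyAbs (M.absv v) p ≤ 1 := hcoeffle p h1
  have hqle : polyAbs (M.absv v) q ≤ 1 := hcoeffle q h2
  have hlc : M.absv v q.leadingCoeff = 1 := by
    rcases off_bad h3 with h | h
    · exact h
    · exfalso
      have : q.leadingCoeff ≠ 0 := leadingCoeff_ne_zero.mpr hq
      exact this ((M.absv v).eq_zero.mp h)
  have hqge : (1:ℝ) ≤ polyAbs (M.absv v) q := by
    rw [← hlc]; exact av_leadingCoeff_le _ q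
  have : max (polyAbs (M.absv v) p) (polyAbs (M.absv v) q) = 1 :=
    le_antisymm (max_le hple hqle) (le_trans hqge (le_max_right _ _))
  rw [this, Real.log_one] at hv
  exact hv rfl

lemma ht_nonneg' (M : PlaceData K) (x : K) : 0 ≤ M.ht x :=
  finsum_nonneg fun v => Real.log_nonneg (le_max_right _ _)

lemma ht_frac (M : PlaceData K) (a b : K) (hb : b ≠ 0) :
    M.ht (a / b) = ∑ᶠ v, Real.log (max (M.absv v a) (M.absv v b)) := by
  unfold PlaceData.ht
  have hcong : ∀ v : M.Place, Real.log (max (M.absv v (a / b)) 1)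
      = Real.log (max (M.absv v a) (M.absv v b)) - Real.log (M.absv v b) := by
    intro v
    have hbpos : 0 < M.absv v b := (M.absv v).pos hb
    have h1 : max (M.absv v (a / b)) 1 = max (M.absv v a) (M.absv v b) / M.absv v b := by
      rw [map_div₀]
      rw [show (1:ℝ) = M.absv v b / M.absv v b from (div_self (ne_of_gt hbpos)).symm]
      exact max_div_div_right (le_of_lt hbpos) _ _
    rw [h1, Real.log_div (ne_of_gt (lt_of_lt_of_le hbpos (le_max_right _ _)))
      (ne_of_gt hbpos)]
  rw [finsum_congr hcong]
  rw [finsum_sub_distrib (supp_logmax2 M a b) (supp_log M hb)]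
  rw [M.product_formula b hb, sub_zero]

end Sums


section MainStep

lemma main_step {K : Type*} [Field K] {d : ℕ} (hd : 2 ≤ d) (M : PlaceData K)
    (φ : RatFunc K) (hdeg : degRF φ = d) :
    0 ≤ M.htRF φ ∧ ∀ P : Option K,
      |M.htP1 (evalP1 φ P) - (d : ℝ) * M.htP1 P| ≤ 2 * (d : ℝ) * M.htRF φ := by
  classical
  have hg0 : φ.denom ≠ 0 := φ.denom_ne_zero
  have hf0 : φ.num ≠ 0 := by
    intro h
    have h2 : φ = 0 := RatFunc.num_eq_zero_iff.mp h
    rw [h2] at hdeg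
    have h3 : degRF (0 : RatFunc K) = 0 := by simp [degRF]
    omega
  set c := φ.denom.leadingCoeff with hc
  have hc0 : c ≠ 0 := leadingCoeff_ne_zero.mpr hg0
  have hci : c⁻¹ ≠ 0 := inv_ne_zero hc0
  have hCunit : IsUnit (C c⁻¹ : K[X]) := Polynomial.isUnit_C.mpr (isUnit_iff_ne_zero.mpr hci)
  set f₁ : K[X] := C c⁻¹ * φ.num with hf₁
  set g₁ : K[X] := C c⁻¹ * φ.denom with hg₁
  have hCne : (C c⁻¹ : K[X]) ≠ 0 := by
    simpa using hci
  have hf₁0 : f₁ ≠ 0 := mul_ne_zero hCne hf0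
  have hg₁0 : g₁ ≠ 0 := mul_ne_zero hCne hg0
  have hf₁d : f₁.natDegree = φ.num.natDegree := natDegree_C_mul hci
  have hg₁d : g₁.natDegree = φ.denom.natDegree := natDegree_C_mul hci
  have hdeg' : max f₁.natDegree g₁.natDegree = d := by
    rw [hf₁d, hg₁d]; simpa [degRF] using hdeg
  have hfd : f₁.natDegree ≤ d := le_of_le_of_eq (le_max_left _ _) hdeg'
  have hgd : g₁.natDegree ≤ d := le_of_le_of_eq (le_max_right _ _) hdeg'
  have htop : f₁.natDegree = d ∨ g₁.natDegree = d := by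
    rcases max_choice f₁.natDegree g₁.natDegree with h | h
    · left; rw [← h]; exact hdeg'
    · right; rw [← h]; exact hdeg'
  have hcop1 : IsCoprime f₁ g₁ := by
    have h := φ.isCoprime_num_denom
    exact (isCoprime_mul_unit_left hCunit _ _).mpr h
  have hmon : g₁.leadingCoeff = 1 := by
    rw [hg₁, leadingCoeff_mul, leadingCoeff_C, ← hc, inv_mul_cancel₀ hc0]
  set Phi : M.Place → ℝ :=
    fun v => max (polyAbs (M.absv v) f₁) (polyAbs (M.absv v) g₁) with hPhidef
  have hPhi1 : ∀ v, (1:ℝ) ≤ Phi v := by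
    intro v
    calc (1:ℝ) = M.absv v g₁.leadingCoeff := by rw [hmon, map_one]
      _ ≤ polyAbs (M.absv v) g₁ := av_leadingCoeff_le _ _
      _ ≤ Phi v := le_max_right _ _
  have hsPhi : (Function.support fun v => Real.log (Phi v)).Finite :=
    supp_logPhi M f₁ g₁ hg₁0
  set hphi : ℝ := ∑ᶠ v, Real.log (Phi v) with hphidef
  have hphi0 : 0 ≤ hphi := finsum_nonneg fun v => Real.log_nonneg (hPhi1 v)
  have hphi_eq : M.htRF φ = hphi := by
    unfold PlaceData.htRF
    have hcong : ∀ v : M.Place,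
        Real.log (max (polyAbs (M.absv v) φ.num) (polyAbs (M.absv v) φ.denom))
          = Real.log (Phi v) + Real.log (M.absv v c) := by
      intro v
      have h1 : Phi v = (M.absv v c)⁻¹ *
          max (polyAbs (M.absv v) φ.num) (polyAbs (M.absv v) φ.denom) := by
        rw [hPhidef]
        simp only
        rw [hf₁, hg₁, polyAbs_C_mul _ hci, polyAbs_C_mul _ hci, map_inv₀]
        exact (mul_max_of_nonneg _ _ (by positivity)).symm
      have hcpos : 0 < M.absv v c := (M.absv v).pos hc0
      have hmaxpos : 0 < max (polyAbs (M.absv v) φ.num) (polyAbs (M.absv v) φ.denom) := by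
        refine lt_of_lt_of_le hcpos (le_trans ?_ (le_max_right _ _))
        rw [hc]
        exact av_leadingCoeff_le _ _
      rw [h1, Real.log_mul (by positivity) (ne_of_gt hmaxpos), Real.log_inv]
      ring
    rw [finsum_congr hcong, finsum_add_distrib hsPhi (supp_log M hc0),
      M.product_formula c hc0, add_zero]
  refine ⟨by rw [hphi_eq]; exact hphi0, ?_⟩
  obtain ⟨R, hR0, hRbound⟩ :=
    key_bounds (by omega : 1 ≤ d) f₁ g₁ hcop1 hfd hgd htop hf₁0 hg₁0
  have hRb : ∀ (v : M.Place) (x : K),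
      M.absv v R * max (M.absv v x) 1 ^ d ≤
        Phi v ^ (2*d) * max (M.absv v (f₁.eval x)) (M.absv v (g₁.eval x)) := by
    intro v x
    have h := hRbound (M.absv v) (M.nonarch v) x
    rwa [show max (max (polyAbs (M.absv v) f₁) (polyAbs (M.absv v) g₁)) 1 = Phi v
      from max_eq_left (hPhi1 v)] at h
  have hUB : ∀ (x : K) (v : M.Place),
      Real.log (max (M.absv v (f₁.eval x)) (M.absv v (g₁.eval x))) ≤
        Real.log (Phi v) + (d:ℝ) * Real.log (max (M.absv v x) 1) := by
    intro x v
    have hmx : (1:ℝ) ≤ max (M.absv v x) 1 := le_max_right _ _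
    have hPv0 : (0:ℝ) < Phi v := lt_of_lt_of_le one_pos (hPhi1 v)
    have h1 : max (M.absv v (f₁.eval x)) (M.absv v (g₁.eval x)) ≤
        Phi v * max (M.absv v x) 1 ^ d := by
      refine max_le ?_ ?_
      · refine av_eval_le _ (M.nonarch v) f₁ x (le_of_lt hPv0) hfd ?_
        intro i
        exact le_trans (av_coeff_le_polyAbs _ _ _) (le_max_left _ _)
      · refine av_eval_le _ (M.nonarch v) g₁ x (le_of_lt hPv0) hgd ?_
        intro i
        exact le_trans (av_coeff_le_polyAbs _ _ _) (le_max_right _ _)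
    have hp : (1:ℝ) ≤ max (M.absv v x) 1 ^ d := by
      calc (1:ℝ) = 1 ^ d := (one_pow d).symm
        _ ≤ max (M.absv v x) 1 ^ d := pow_le_pow_left₀ zero_le_one hmx d
    have h2 : (1:ℝ) ≤ Phi v * max (M.absv v x) 1 ^ d := by nlinarith [hPhi1 v]
    calc Real.log (max (M.absv v (f₁.eval x)) (M.absv v (g₁.eval x)))
        ≤ Real.log (Phi v * max (M.absv v x) 1 ^ d) :=
          log_le_log_aux (le_trans ((M.absv v).nonneg _) (le_max_left _ _)) h1 h2
      _ = Real.log (Phi v) + (d:ℝ) * Real.log (max (M.absv v x) 1) := by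
          rw [Real.log_mul (ne_of_gt hPv0) (ne_of_gt (by positivity)), Real.log_pow]
  have hLB : ∀ (x : K) (v : M.Place),
      Real.log (M.absv v R) + (d:ℝ) * Real.log (max (M.absv v x) 1) ≤
        2*(d:ℝ) * Real.log (Phi v) +
          Real.log (max (M.absv v (f₁.eval x)) (M.absv v (g₁.eval x))) := by
    intro x v
    have h1 := hRb v x
    have hmx : (1:ℝ) ≤ max (M.absv v x) 1 := le_max_right _ _
    have hPv0 : (0:ℝ) < Phi v := lt_of_lt_of_le one_pos (hPhi1 v)
    have hLpos : 0 < M.absv v R * max (M.absv v x) 1 ^ d :=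
      mul_pos ((M.absv v).pos hR0) (pow_pos (by linarith) d)
    have hPpos : (0:ℝ) < Phi v ^ (2*d) := pow_pos hPv0 _
    have hEpos : 0 < max (M.absv v (f₁.eval x)) (M.absv v (g₁.eval x)) := by
      rcases lt_or_ge 0 (max (M.absv v (f₁.eval x)) (M.absv v (g₁.eval x))) with h | h
      · exact h
      · exfalso; nlinarith
    have h2 := Real.log_le_log hLpos h1
    rw [Real.log_mul (ne_of_gt ((M.absv v).pos hR0)) (ne_of_gt (pow_pos (by linarith) d)),
      Real.log_pow, Real.log_mul (ne_of_gt hPpos) (ne_of_gt hEpos), Real.log_pow] at h2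
    push_cast at h2
    linarith
  have hsupp_add : ∀ {f g : M.Place → ℝ}, (Function.support f).Finite →
      (Function.support g).Finite → (Function.support fun v => f v + g v).Finite := by
    intro f g hf hg
    refine (hf.union hg).subset ?_
    intro v hv
    rw [Function.mem_support] at hv
    by_contra h
    simp only [Set.mem_union, Function.mem_support, not_or, not_not] at h
    rw [h.1, h.2, add_zero] at hv
    exact hv rfl
  have hsmul : ∀ (r : ℝ) {f : M.Place → ℝ}, (Function.support f).Finite →
      (Function.support fun v => r * f v).Finite := by
    intro r f hf
    refine hf.subset ?_
    intro v hv
    rw [Function.mem_support] at hv ⊢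
    intro h
    rw [h, mul_zero] at hv
    exact hv rfl
  have hsum : ∀ x : K,
      (d:ℝ) * M.ht x ≤ 2*(d:ℝ)*hphi +
        (∑ᶠ v, Real.log (max (M.absv v (f₁.eval x)) (M.absv v (g₁.eval x)))) ∧
      (∑ᶠ v, Real.log (max (M.absv v (f₁.eval x)) (M.absv v (g₁.eval x)))) ≤
        hphi + (d:ℝ) * M.ht x := by
    intro x
    have hsT : (Function.support fun v =>
        Real.log (max (M.absv v (f₁.eval x)) (M.absv v (g₁.eval x)))).Finite :=
      supp_logmax2 M _ _
    have hsx : (Function.support fun v => Real.log (max (M.absv v x) 1)).Finite :=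
      supp_logmax1 M x
    have hsR : (Function.support fun v => Real.log (M.absv v R)).Finite := supp_log M hR0
    have hht : M.ht x = ∑ᶠ v, Real.log (max (M.absv v x) 1) := rfl
    constructor
    · have hm := finsum_mono (hsupp_add hsR (hsmul _ hsx))
        (hsupp_add (hsmul _ hsPhi) hsT) (fun v => hLB x v)
      rw [finsum_add_distrib hsR (hsmul _ hsx),
        finsum_add_distrib (hsmul _ hsPhi) hsT,
        M.product_formula R hR0, zero_add,
        ← mul_finsum _ _, ← mul_finsum _ _] at hm
      rw [hht]
      exact hm
    · have hm := finsum_mono hsT (hsupp_add hsPhi (hsmul _ hsx)) (fun v => hUB x v)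
      rw [finsum_add_distrib hsPhi (hsmul _ hsx), ← mul_finsum _ _] at hm
      rw [hht]
      exact hm
  intro P
  rcases P with _ | x
  · by_cases hlt : φ.denom.natDegree < φ.num.natDegree
    · rw [show evalP1 φ Option.none = Option.none by simp [evalP1, hlt]]
      show |(0:ℝ) - (d:ℝ) * 0| ≤ _
      rw [hphi_eq]
      have h2d : (0:ℝ) ≤ 2*(d:ℝ) := by positivity
      simp only [mul_zero, sub_zero, abs_zero]
      nlinarith
    · have hnd : φ.num.natDegree ≤ φ.denom.natDegree := le_of_not_gt hlt
      rw [show evalP1 φ Option.none =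
        Option.some (φ.num.coeff φ.denom.natDegree / φ.denom.leadingCoeff) by
          simp [evalP1, hlt]]
      show |M.ht (φ.num.coeff φ.denom.natDegree / φ.denom.leadingCoeff) - (d:ℝ) * 0| ≤ _
      have hgdd : φ.denom.natDegree = d := by
        have h4 : degRF φ = φ.denom.natDegree := by
          simp [degRF, max_eq_right hnd]
        omega
      set y := φ.num.coeff φ.denom.natDegree / φ.denom.leadingCoeff with hy
      have hyval : y = f₁.coeff d := by
        rw [hy, hf₁, coeff_C_mul, hgdd, ← hc, div_eq_inv_mul]
      have h1 : M.ht y ≤ hphi := by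
        refine finsum_mono (supp_logmax1 M y) hsPhi ?_
        intro v
        refine Real.log_le_log (lt_of_lt_of_le one_pos (le_max_right _ _)) ?_
        refine max_le ?_ (hPhi1 v)
        rw [hyval]
        exact le_trans (av_coeff_le_polyAbs _ _ _) (le_max_left _ _)
      rw [mul_zero, sub_zero, abs_of_nonneg (ht_nonneg' M y), hphi_eq]
      have h2d : (2:ℝ) ≤ (d:ℝ) := by exact_mod_cast hd
      nlinarith
  · have hg1x : g₁.eval x = c⁻¹ * φ.denom.eval x := by rw [hg₁]; simp
    have hf1x : f₁.eval x = c⁻¹ * φ.num.eval x := by rw [hf₁]; simp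
    obtain ⟨hA, hB⟩ := hsum x
    by_cases hz : φ.denom.eval x = 0
    · rw [show evalP1 φ (Option.some x) = Option.none by simp [evalP1, hz]]
      show |(0:ℝ) - (d:ℝ) * M.ht x| ≤ _
      have hgx0 : g₁.eval x = 0 := by rw [hg1x, hz, mul_zero]
      have hfx0 : f₁.eval x ≠ 0 := coprime_eval_ne hcop1 x hgx0
      have hT0 : (∑ᶠ v, Real.log (max (M.absv v (f₁.eval x)) (M.absv v (g₁.eval x)))) = 0 := by
        have hcong : ∀ v : M.Place,
            Real.log (max (M.absv v (f₁.eval x)) (M.absv v (g₁.eval x)))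
              = Real.log (M.absv v (f₁.eval x)) := by
          intro v
          rw [hgx0, map_zero, max_eq_left ((M.absv v).nonneg _)]
        rw [finsum_congr hcong, M.product_formula _ hfx0]
      rw [hT0] at hA
      rw [zero_sub, abs_neg,
        abs_of_nonneg (mul_nonneg (by positivity) (ht_nonneg' M x)), hphi_eq]
      linarith
    · rw [show evalP1 φ (Option.some x) = Option.some (φ.num.eval x / φ.denom.eval x) by
        simp [evalP1, hz]]
      show |M.ht (φ.num.eval x / φ.denom.eval x) - (d:ℝ) * M.ht x| ≤ _
      have hgx0 : g₁.eval x ≠ 0 := by rw [hg1x]; exact mul_ne_zero hci hz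
      have hdiv : φ.num.eval x / φ.denom.eval x = f₁.eval x / g₁.eval x := by
        rw [hf1x, hg1x, mul_div_mul_left _ _ hci]
      rw [hdiv, ht_frac M _ _ hgx0, hphi_eq]
      rw [abs_le]
      have h2d : (2:ℝ) ≤ (d:ℝ) := by exact_mod_cast hd
      constructor
      · linarith
      · nlinarith

end MainStep

/-- constants `c₃, c₄` depending only on `d` with
`|ĥ_φ(P) - h(P)| ≤ c₃·h(φ) + c₄`. -/
theorem stmt_4 (d : ℕ) (hd : 2 ≤ d) :
    ∃ c₃ c₄ : ℝ, ∀ (K : Type) (_ : Field K) (M : PlaceData K) (φ : RatFunc K),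
      degRF φ = d → ∀ P : Option K,
        |canHt M φ P - M.htP1 P| ≤ c₃ * M.htRF φ + c₄ := by
  refine ⟨4, 0, ?_⟩
  intro K _ M φ hdeg P
  obtain ⟨hRF0, hstep⟩ := main_step hd M φ hdeg
  have hd2 : (2:ℝ) ≤ (d:ℝ) := by exact_mod_cast hd
  have hdpos : (0:ℝ) < (d:ℝ) := by linarith
  have hr : (1:ℝ)/(d:ℝ) < 1 := by
    rw [div_lt_one hdpos]; linarith
  set u : ℕ → ℝ := fun n => M.htP1 ((evalP1 φ)^[n] P) / (d:ℝ) ^ n with hu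
  have hC0 : (0:ℝ) ≤ 2 * M.htRF φ := by linarith
  have hdist : ∀ n : ℕ, dist (u n) (u (n+1)) ≤ (2 * M.htRF φ) * ((1:ℝ)/(d:ℝ))^n := by
    intro n
    have h := hstep ((evalP1 φ)^[n] P)
    rw [Real.dist_eq]
    have hun1 : u (n+1) = M.htP1 (evalP1 φ ((evalP1 φ)^[n] P)) / (d:ℝ)^(n+1) := by
      rw [hu]
      simp only
      rw [Function.iterate_succ_apply']
    have hpowpos : (0:ℝ) < (d:ℝ)^(n+1) := pow_pos hdpos _
    have hexpand : u n - u (n+1) =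
        ((d:ℝ) * M.htP1 ((evalP1 φ)^[n] P)
          - M.htP1 (evalP1 φ ((evalP1 φ)^[n] P))) / (d:ℝ)^(n+1) := by
      rw [hun1, hu]
      simp only
      rw [pow_succ]
      field_simp
    rw [hexpand, abs_div, abs_of_pos hpowpos]
    rw [div_le_iff₀ hpowpos]
    have habs : |(d:ℝ) * M.htP1 ((evalP1 φ)^[n] P)
        - M.htP1 (evalP1 φ ((evalP1 φ)^[n] P))| ≤ 2 * (d:ℝ) * M.htRF φ := by
      rw [abs_sub_comm]
      exact h
    have hrw : (2 * M.htRF φ) * ((1:ℝ)/(d:ℝ))^n * (d:ℝ)^(n+1) = 2 * (d:ℝ) * M.htRF φ := by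
      rw [one_div, inv_pow, pow_succ]
      field_simp
    rw [hrw]
    exact habs
  have hcauchy : CauchySeq u := cauchySeq_of_le_geometric _ _ hr hdist
  obtain ⟨L, hL⟩ := cauchySeq_tendsto_of_complete hcauchy
  have hlim : canHt M φ P = L := by
    unfold canHt
    rw [hdeg]
    exact hL.limUnder_eq
  have hdist0 := dist_le_of_le_geometric_of_tendsto₀ _ _ hr hdist hL
  have hu0 : u 0 = M.htP1 P := by simp [hu]
  have hhalf : (1:ℝ)/2 ≤ 1 - 1/(d:ℝ) := by
    have h1 : (1:ℝ)/(d:ℝ) ≤ 1/2 := by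
      apply div_le_div_of_nonneg_left zero_le_one (by norm_num) hd2
    linarith
  have hfinal : (2 * M.htRF φ) / (1 - 1/(d:ℝ)) ≤ 4 * M.htRF φ := by
    have h1 : (2 * M.htRF φ) / (1 - 1/(d:ℝ)) ≤ (2 * M.htRF φ) / (1/2) :=
      div_le_div_of_nonneg_left hC0 (by norm_num) hhalf
    have h2 : (2 * M.htRF φ) / ((1:ℝ)/2) = 4 * M.htRF φ := by ring
    linarith
  rw [hlim, add_zero]
  calc |L - M.htP1 P| = dist (u 0) L := by rw [Real.dist_eq, abs_sub_comm, hu0]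
    _ ≤ (2 * M.htRF φ) / (1 - 1/(d:ℝ)) := hdist0
    _ ≤ 4 * M.htRF φ := hfinal

end
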